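/- Under the stated operator setting, let 1 ≤ k ≤ r, let Φ be an n-dimensional subspace of H with n > k, let λ₁ ≥ ⋯ ≥ λ_n be the Ritz values of T on Φ with Ritz basis γ₁, …, γ_n, and assume μ_k > λ_{k+1}. Then d_F(span{η₁, …, η_k}, Φ)² ≤ d_F(span{γ₁, …, γ_k}, span{η₁, …, η_k})² ≤ (1 + ‖P_{Φ⊥} T P_Φ‖₂² / (μ_k − λ_{k+1})²) · d_F(span{η₁, …, η_k}, Φ)². -/

import Mathlib

set_option linter.unusedSectionVars false
set_option maxHeartbeats 1000000


open scoped RealInnerProductSpace ENNReal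
open Submodule Filter

noncomputable section

variable {H : Type*} [NormedAddCommGroup H] [InnerProductSpace ℝ H] [CompleteSpace H]

/-- Orthogonal projection onto `U`, as an operator `H → H` (defined to be `0` in the
degenerate case where `U` admits no orthogonal projection). -/
noncomputable def proj (U : Submodule ℝ H) : H →L[ℝ] H := by
  classical
  exact if h : HasOrthogonalProjection U then
    (haveI := h; U.subtypeL ∘L orthogonalProjection U)
  else 0

/-- Squared Hilbert–Schmidt norm of an operator, computed in a fixed Hilbert basis of `H`. -/
noncomputable def hsNormSq (A : H →L[ℝ] H) : ℝ≥0∞ :=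
  ∑' i : (exists_hilbertBasis ℝ H).choose,
    (‖A ((exists_hilbertBasis ℝ H).choose_spec.choose i)‖₊ : ℝ≥0∞) ^ 2

/-- Hilbert–Schmidt (Frobenius) norm of an operator. -/
noncomputable def hsNorm (A : H →L[ℝ] H) : ℝ := Real.sqrt (hsNormSq A).toReal

/-- Projection distance `d_F(U, W) = ‖P_{Wᗮ} P_U‖_F`. -/
noncomputable def dF (U W : Submodule ℝ H) : ℝ := hsNorm ((proj Wᗮ) ∘L (proj U))

/-- Gap distance `d₂(U, W) = ‖P_{Wᗮ} P_U‖₂`. -/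
noncomputable def d2 (U W : Submodule ℝ H) : ℝ := ‖(proj Wᗮ) ∘L (proj U)‖



/-! ### Auxiliary lemmas -/

lemma proj_apply (U : Submodule ℝ H) [HasOrthogonalProjection U] (x : H) :
    proj U x = orthogonalProjection U x := by
  unfold proj
  rw [dif_pos ‹_›]; rfl

lemma proj_mem (U : Submodule ℝ H) [HasOrthogonalProjection U] (x : H) : proj U x ∈ U := by
  rw [proj_apply]; exact (orthogonalProjection U x).2

lemma proj_inner_left (U : Submodule ℝ H) [HasOrthogonalProjection U] (x y : H) :
    ⟪proj U x, y⟫ = ⟪x, proj U y⟫ := by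
  rw [proj_apply, proj_apply]
  exact inner_starProjection_left_eq_right U x y

lemma proj_of_mem {U : Submodule ℝ H} [HasOrthogonalProjection U] {x : H} (h : x ∈ U) :
    proj U x = x := by
  rw [proj_apply]; exact starProjection_eq_self_iff.2 h

lemma proj_of_mem_orthogonal {U : Submodule ℝ H} [HasOrthogonalProjection U] {x : H}
    (h : x ∈ Uᗮ) : proj U x = 0 := by
  rw [proj_apply]
  simpa using congrArg (Subtype.val) (orthogonalProjection_eq_zero_iff.2 h)

lemma proj_add_proj_orthogonal (U : Submodule ℝ H) [HasOrthogonalProjection U] (x : H) :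
    proj U x + proj Uᗮ x = x := by
  rw [proj_apply, proj_apply]
  exact starProjection_add_starProjection_orthogonal (K := U) x

lemma norm_proj_sq_add (U : Submodule ℝ H) [HasOrthogonalProjection U] (x : H) :
    ‖proj U x‖ ^ 2 + ‖proj Uᗮ x‖ ^ 2 = ‖x‖ ^ 2 := by
  rw [proj_apply, proj_apply]
  exact (norm_sq_eq_add_norm_sq_projection x U).symm

lemma mem_orthogonal_span {s : Set H} {x : H} (h : ∀ v ∈ s, ⟪v, x⟫ = 0) :
    x ∈ (span ℝ s)ᗮ := by
  rw [Submodule.mem_orthogonal]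
  intro u hu
  induction hu using span_induction with
  | mem v hv => exact h v hv
  | zero => simp
  | add a b _ _ ha hb => rw [inner_add_left, ha, hb, add_zero]
  | smul c a _ ha => rw [inner_smul_left, ha, mul_zero]

lemma proj_span_eq_sum {m : ℕ} {v : Fin m → H} (hv : Orthonormal ℝ v) (x : H) :
    proj (span ℝ (Set.range v)) x = ∑ i, ⟪v i, x⟫ • v i := by
  haveI : FiniteDimensional ℝ (span ℝ (Set.range v)) :=
    FiniteDimensional.span_of_finite ℝ (Set.finite_range v)
  haveI : CompleteSpace (span ℝ (Set.range v)) := FiniteDimensional.complete ℝ _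
  rw [proj_apply]
  refine eq_starProjection_of_mem_orthogonal ?_ ?_
  · exact sum_mem fun i _ => smul_mem _ _ (subset_span ⟨i, rfl⟩)
  · refine mem_orthogonal_span ?_
    rintro w ⟨j, rfl⟩
    rw [inner_sub_right, inner_sum]
    simp only [inner_smul_right]
    rw [Finset.sum_eq_single j]
    · rw [orthonormal_iff_ite.1 hv j j]; simp [real_inner_comm]
    · intro i _ hij
      rw [orthonormal_iff_ite.1 hv j i, if_neg (by exact fun h => hij h.symm), mul_zero]
    · simp

lemma norm_proj_span_sq {m : ℕ} {v : Fin m → H} (hv : Orthonormal ℝ v) (x : H) :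
    ‖proj (span ℝ (Set.range v)) x‖ ^ 2 = ∑ i, ⟪v i, x⟫ ^ 2 := by
  rw [proj_span_eq_sum hv x, ← real_inner_self_eq_norm_sq, hv.inner_sum]
  simp [sq]

lemma norm_proj_orth_sq {m : ℕ} {v : Fin m → H} (hv : Orthonormal ℝ v) (x : H) :
    ‖proj (span ℝ (Set.range v))ᗮ x‖ ^ 2 = ‖x‖ ^ 2 - ∑ i, ⟪v i, x⟫ ^ 2 := by
  haveI : FiniteDimensional ℝ (span ℝ (Set.range v)) :=
    FiniteDimensional.span_of_finite ℝ (Set.finite_range v)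
  haveI : CompleteSpace (span ℝ (Set.range v)) := FiniteDimensional.complete ℝ _
  have h := norm_proj_sq_add (span ℝ (Set.range v)) x
  rw [norm_proj_span_sq hv] at h
  linarith

lemma parseval_enn {ι : Type*} (b : HilbertBasis ι ℝ H) (x : H) :
    ∑' i, (‖⟪b i, x⟫‖₊ : ℝ≥0∞) ^ 2 = (‖x‖₊ : ℝ≥0∞) ^ 2 := by
  have h : HasSum (fun i => ⟪x, b i⟫ * ⟪b i, x⟫) ⟪x, x⟫ := b.hasSum_inner_mul_inner x x
  have h2 : HasSum (fun i => ⟪b i, x⟫ ^ 2) (‖x‖ ^ 2) := by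
    rw [← real_inner_self_eq_norm_sq]
    convert h using 2 with i
    rw [sq, real_inner_comm]
  have hsq : ∀ a : ℝ, (‖a‖₊ : ℝ≥0∞) ^ 2 = ENNReal.ofReal (a ^ 2) := by
    intro a
    rw [← enorm_eq_nnnorm, ← ofReal_norm, ← ENNReal.ofReal_pow (norm_nonneg a)]
    congr 1
    rw [Real.norm_eq_abs, sq_abs]
  simp_rw [hsq]
  rw [← ENNReal.ofReal_tsum_of_nonneg (fun i => sq_nonneg _) h2.summable, h2.tsum_eq,
    ← enorm_eq_nnnorm, ← ofReal_norm, ← ENNReal.ofReal_pow (norm_nonneg x)]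

lemma hs_flip {ι κ : Type*} (b : HilbertBasis ι ℝ H) (c : HilbertBasis κ ℝ H) (A : H →L[ℝ] H) :
    ∑' i, (‖A (b i)‖₊ : ℝ≥0∞) ^ 2
      = ∑' j, (‖ContinuousLinearMap.adjoint A (c j)‖₊ : ℝ≥0∞) ^ 2 := by
  calc ∑' i, (‖A (b i)‖₊ : ℝ≥0∞) ^ 2
      = ∑' i, ∑' j, (‖⟪c j, A (b i)⟫‖₊ : ℝ≥0∞) ^ 2 := by
        exact tsum_congr fun i => (parseval_enn c (A (b i))).symm
    _ = ∑' j, ∑' i, (‖⟪b i, ContinuousLinearMap.adjoint A (c j)⟫‖₊ : ℝ≥0∞) ^ 2 := by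
        rw [ENNReal.tsum_comm]
        refine tsum_congr fun j => tsum_congr fun i => ?_
        congr 2
        exact congrArg (fun t : ℝ => ‖t‖₊)
          ((real_inner_comm _ _).trans (ContinuousLinearMap.adjoint_inner_right A _ _).symm)
    _ = ∑' j, (‖ContinuousLinearMap.adjoint A (c j)‖₊ : ℝ≥0∞) ^ 2 :=
        tsum_congr fun j => parseval_enn b _

lemma proj_adjoint (U : Submodule ℝ H) [HasOrthogonalProjection U] :
    ContinuousLinearMap.adjoint (proj U) = proj U := by
  symm
  rw [ContinuousLinearMap.eq_adjoint_iff]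
  exact proj_inner_left U

lemma hsNormSq_eq_adjoint {κ : Type*} (c : HilbertBasis κ ℝ H) (A : H →L[ℝ] H) :
    hsNormSq A = ∑' j, (‖ContinuousLinearMap.adjoint A (c j)‖₊ : ℝ≥0∞) ^ 2 := by
  unfold hsNormSq
  exact hs_flip _ c A

lemma hsNormSq_comp_proj {m : ℕ} {v : Fin m → H} (hv : Orthonormal ℝ v) (A : H →L[ℝ] H) :
    hsNormSq (A ∘L proj (span ℝ (Set.range v))) = ∑ i, (‖A (v i)‖₊ : ℝ≥0∞) ^ 2 := by
  set U := span ℝ (Set.range v) with hU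
  haveI : FiniteDimensional ℝ U := FiniteDimensional.span_of_finite ℝ (Set.finite_range v)
  haveI : CompleteSpace U := FiniteDimensional.complete ℝ _
  obtain ⟨w, c, hc⟩ := exists_hilbertBasis ℝ H
  rw [hsNormSq_eq_adjoint c]
  have hadj : ∀ y : H, ContinuousLinearMap.adjoint (A ∘L proj U) y
      = proj U (ContinuousLinearMap.adjoint A y) := by
    intro y
    rw [ContinuousLinearMap.adjoint_comp, proj_adjoint]
    rfl
  calc ∑' j, (‖ContinuousLinearMap.adjoint (A ∘L proj U) (c j)‖₊ : ℝ≥0∞) ^ 2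
      = ∑' j, ∑ i, (‖⟪v i, ContinuousLinearMap.adjoint A (c j)⟫‖₊ : ℝ≥0∞) ^ 2 := by
        refine tsum_congr fun j => ?_
        rw [hadj]
        rw [← enorm_eq_nnnorm, ← ofReal_norm, ← ENNReal.ofReal_pow (norm_nonneg _),
          norm_proj_span_sq hv, ENNReal.ofReal_sum_of_nonneg (fun i _ => sq_nonneg _)]
        refine Finset.sum_congr rfl fun i _ => ?_
        rw [← enorm_eq_nnnorm, ← ofReal_norm, ← ENNReal.ofReal_pow (norm_nonneg _)]
        congr 1
        rw [Real.norm_eq_abs, sq_abs]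
    _ = ∑ i, ∑' j, (‖⟪v i, ContinuousLinearMap.adjoint A (c j)⟫‖₊ : ℝ≥0∞) ^ 2 :=
        (Summable.tsum_finsetSum fun i _ => ENNReal.summable)
    _ = ∑ i, (‖A (v i)‖₊ : ℝ≥0∞) ^ 2 := by
        refine Finset.sum_congr rfl fun i _ => ?_
        rw [← parseval_enn c (A (v i))]
        refine tsum_congr fun j => ?_
        congr 2
        exact congrArg (fun t : ℝ => ‖t‖₊)
          ((ContinuousLinearMap.adjoint_inner_right A _ _).trans (real_inner_comm _ _).symm)

lemma hsNormSq_comp_proj_toReal {m : ℕ} {v : Fin m → H} (hv : Orthonormal ℝ v)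
    (A : H →L[ℝ] H) :
    (hsNormSq (A ∘L proj (span ℝ (Set.range v)))).toReal = ∑ i, ‖A (v i)‖ ^ 2 := by
  rw [hsNormSq_comp_proj hv, ENNReal.toReal_sum (fun i _ => by
    exact ENNReal.pow_ne_top ENNReal.coe_ne_top)]
  refine Finset.sum_congr rfl fun i _ => ?_
  rw [ENNReal.toReal_pow, ENNReal.coe_toReal, coe_nnnorm]

lemma dF_sq (U W : Submodule ℝ H) :
    dF U W ^ 2 = (hsNormSq ((proj Wᗮ) ∘L (proj U))).toReal := by
  rw [dF, hsNorm, Real.sq_sqrt ENNReal.toReal_nonneg]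

lemma himg (m : ℕ) (f : ℕ → H) :
    f '' Set.Icc 1 m = Set.range (fun i : Fin m => f ((i : ℕ) + 1)) := by
  ext x
  simp only [Set.mem_image, Set.mem_Icc, Set.mem_range]
  constructor
  · rintro ⟨j, ⟨h1, h2⟩, rfl⟩
    exact ⟨⟨j - 1, by omega⟩, by show f (j - 1 + 1) = f j; congr 1; omega⟩
  · rintro ⟨i, rfl⟩
    exact ⟨(i : ℕ) + 1, ⟨by omega, by have := i.isLt; omega⟩, rfl⟩

lemma orthonormal_shift {M m : ℕ} (f : ℕ → H) (hm : m ≤ M)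
    (hf : ∀ i ∈ Set.Icc 1 M, ∀ j ∈ Set.Icc 1 M, ⟪f i, f j⟫ = if i = j then (1 : ℝ) else 0) :
    Orthonormal ℝ (fun i : Fin m => f ((i : ℕ) + 1)) := by
  rw [orthonormal_iff_ite]
  intro i j
  have hi := i.isLt
  have hj := j.isLt
  rw [hf _ (Set.mem_Icc.2 ⟨by omega, by omega⟩) _ (Set.mem_Icc.2 ⟨by omega, by omega⟩)]
  by_cases h : i = j
  · subst h; simp
  · have hij : (i : ℕ) ≠ (j : ℕ) := fun hc => h (Fin.ext hc)
    rw [if_neg (by omega), if_neg h]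

lemma bessel_finset {ι : Type*} [DecidableEq ι] (t : Finset ι) {u : ι → H}
    (hu : ∀ i ∈ t, ∀ j ∈ t, ⟪u i, u j⟫ = if i = j then (1 : ℝ) else 0) (z : H) :
    ∑ j ∈ t, ⟪u j, z⟫ ^ 2 ≤ ‖z‖ ^ 2 := by
  have ho : Orthonormal ℝ (fun j : t => u j) := by
    rw [orthonormal_iff_ite]
    rintro ⟨i, hi⟩ ⟨j, hj⟩
    rw [hu i hi j hj]
    by_cases h : i = j
    · subst h; simp
    · rw [if_neg h, if_neg (fun hc => h (congrArg Subtype.val hc))]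
  have hb := ho.sum_inner_products_le (s := Finset.univ) z
  rw [← Finset.sum_coe_sort t (fun j => ⟪u j, z⟫ ^ 2)]
  calc ∑ j : t, ⟪u j, z⟫ ^ 2 = ∑ j : t, ‖⟪u j, z⟫‖ ^ 2 := by
        refine Finset.sum_congr rfl fun j _ => ?_
        rw [Real.norm_eq_abs, sq_abs]
    _ ≤ ‖z‖ ^ 2 := hb

/-- Rayleigh–Ritz eigenspace bound:
`d_F(E₁ₖ, Φ)² ≤ d_F(Γ₁ₖ, E₁ₖ)² ≤ (1 + ‖P_{Φᗮ} T P_Φ‖₂²/(μ_k − λ_{k+1})²) d_F(E₁ₖ, Φ)²`,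
where `E₁ₖ = span{η₁..η_k}` and `Γ₁ₖ = span{γ₁..γ_k}`. -/
theorem stmt4 {H : Type*} [NormedAddCommGroup H] [InnerProductSpace ℝ H] [CompleteSpace H]
    (T : H →L[ℝ] H)
    (hTsa : ∀ x y : H, ⟪T x, y⟫ = ⟪x, T y⟫)
    (hTpos : ∀ u : H, 0 ≤ ⟪u, T u⟫)
    (r : ℕ) (hr : 1 ≤ r) (η : ℕ → H) (μ : ℕ → ℝ)
    (hη : ∀ i ∈ Set.Icc 1 r, ∀ j ∈ Set.Icc 1 r, ⟪η i, η j⟫ = if i = j then (1 : ℝ) else 0)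
    (hTeig : ∀ i ∈ Set.Icc 1 r, T (η i) = μ i • η i)
    (hμmono : ∀ i ∈ Set.Icc 1 (r + 1), ∀ j ∈ Set.Icc 1 (r + 1), i ≤ j → μ j ≤ μ i)
    (hμr : 0 < μ r) (hμr1 : 0 ≤ μ (r + 1))
    (hTinv : ∀ w ∈ (span ℝ (η '' Set.Icc 1 r))ᗮ, T w ∈ (span ℝ (η '' Set.Icc 1 r))ᗮ)
    (hTres : ∀ w ∈ (span ℝ (η '' Set.Icc 1 r))ᗮ, ⟪w, T w⟫ ≤ μ (r + 1) * ‖w‖ ^ 2)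
    (n : ℕ) (Φ : Submodule ℝ H) (hΦfd : FiniteDimensional ℝ Φ) (hΦn : Module.finrank ℝ Φ = n)
    (lam : ℕ → ℝ) (γ : ℕ → H)
    (hγ : ∀ i ∈ Set.Icc 1 n, ∀ j ∈ Set.Icc 1 n, ⟪γ i, γ j⟫ = if i = j then (1 : ℝ) else 0)
    (hγspan : span ℝ (γ '' Set.Icc 1 n) = Φ)
    (hγeig : ∀ i ∈ Set.Icc 1 n, proj Φ (T (γ i)) = lam i • γ i)
    (hlam : ∀ i ∈ Set.Icc 1 n, ∀ j ∈ Set.Icc 1 n, i ≤ j → lam j ≤ lam i)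
    (k : ℕ) (hk1 : 1 ≤ k) (hkr : k ≤ r) (hkn : k < n)
    (hgap : lam (k + 1) < μ k) :
    dF (span ℝ (η '' Set.Icc 1 k)) Φ ^ 2 ≤
        dF (span ℝ (γ '' Set.Icc 1 k)) (span ℝ (η '' Set.Icc 1 k)) ^ 2 ∧
      dF (span ℝ (γ '' Set.Icc 1 k)) (span ℝ (η '' Set.Icc 1 k)) ^ 2 ≤
        (1 + ‖proj Φᗮ ∘L (T ∘L proj Φ)‖ ^ 2 / (μ k - lam (k + 1)) ^ 2) *
          dF (span ℝ (η '' Set.Icc 1 k)) Φ ^ 2 := by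
  classical
  haveI : CompleteSpace Φ := FiniteDimensional.complete ℝ Φ
  set η' : Fin k → H := fun i => η ((i : ℕ) + 1) with hη'def
  set γ' : Fin n → H := fun i => γ ((i : ℕ) + 1) with hγ'def
  set g : Fin k → H := fun i => γ ((i : ℕ) + 1) with hgdef
  have hηimg : η '' Set.Icc 1 k = Set.range η' := by
    have h := himg k η
    rw [hη'def]
    exact h
  have hγimg : γ '' Set.Icc 1 k = Set.range g := by
    have h := himg k γ
    rw [hgdef]
    exact h
  have hΦ' : span ℝ (Set.range γ') = Φ := by
    rw [← hγspan, himg n γ]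
  set E : Submodule ℝ H := span ℝ (Set.range η') with hEdef
  set G : Submodule ℝ H := span ℝ (Set.range g) with hGdef
  rw [hηimg, hγimg, ← hEdef, ← hGdef]
  haveI : FiniteDimensional ℝ E := FiniteDimensional.span_of_finite ℝ (Set.finite_range η')
  haveI : CompleteSpace E := FiniteDimensional.complete ℝ _
  haveI : FiniteDimensional ℝ G := FiniteDimensional.span_of_finite ℝ (Set.finite_range g)
  haveI : CompleteSpace G := FiniteDimensional.complete ℝ _
  -- orthonormality
  have honη : Orthonormal ℝ η' := orthonormal_shift η hkr hη
  have honγ : Orthonormal ℝ γ' := orthonormal_shift γ le_rfl hγ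
  have hong : Orthonormal ℝ g := orthonormal_shift γ (le_of_lt hkn) hγ
  -- abbreviations
  set R : H →L[ℝ] H := proj Φᗮ ∘L (T ∘L proj Φ) with hRdef
  set C : ℝ := ‖R‖ with hCdef
  set δ : ℝ := μ k - lam (k + 1) with hδdef
  have hδpos : 0 < δ := by rw [hδdef]; linarith
  have hδ2 : 0 < δ ^ 2 := by positivity
  -- squared dF values
  have hA : dF E Φ ^ 2 = ∑ i, ‖proj Φᗮ (η' i)‖ ^ 2 := by
    rw [dF_sq, hEdef]
    exact hsNormSq_comp_proj_toReal honη (proj Φᗮ)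
  have hB : dF G E ^ 2 = ∑ i, ‖proj Eᗮ (g i)‖ ^ 2 := by
    rw [dF_sq, hGdef]
    exact hsNormSq_comp_proj_toReal hong (proj Eᗮ)
  set a : Fin k → ℝ := fun i => ‖proj Φᗮ (η' i)‖ ^ 2 with hadef
  -- norms of the orthonormal vectors
  have hnormη : ∀ i : Fin k, ‖η' i‖ = 1 := honη.1
  have hnormg : ∀ i : Fin k, ‖g i‖ = 1 := hong.1
  -- projection onto Φ in terms of γ'
  have hPΦ : ∀ x : H, ‖proj Φ x‖ ^ 2 = ∑ i : Fin n, ⟪γ' i, x⟫ ^ 2 := by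
    intro x
    rw [← hΦ']
    exact norm_proj_span_sq honγ x
  have haPerp : ∀ i : Fin k, a i = 1 - ∑ j : Fin n, ⟪γ' j, η' i⟫ ^ 2 := by
    intro i
    have h := norm_proj_sq_add Φ (η' i)
    rw [hPΦ, hnormη i] at h
    simp only [hadef]
    linarith [h]
  -- splitting the Fin n sum
  have hrange : ∀ x : H, ∑ i : Fin n, ⟪γ' i, x⟫ ^ 2
      = (∑ i : Fin k, ⟪g i, x⟫ ^ 2) + ∑ m ∈ Finset.Ico k n, ⟪γ (m + 1), x⟫ ^ 2 := by
    intro x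
    have h1 : ∑ i : Fin n, ⟪γ' i, x⟫ ^ 2
        = ∑ m ∈ Finset.range n, ⟪γ (m + 1), x⟫ ^ 2 :=
      Fin.sum_univ_eq_sum_range (fun m => ⟪γ (m + 1), x⟫ ^ 2) n
    have h2 : ∑ i : Fin k, ⟪g i, x⟫ ^ 2
        = ∑ m ∈ Finset.range k, ⟪γ (m + 1), x⟫ ^ 2 :=
      Fin.sum_univ_eq_sum_range (fun m => ⟪γ (m + 1), x⟫ ^ 2) k
    rw [h1, h2, Finset.range_eq_Ico, Finset.range_eq_Ico]
    exact (Finset.sum_Ico_consecutive (fun m => ⟪γ (m + 1), x⟫ ^ 2) (Nat.zero_le k) (le_of_lt hkn)).symm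
  -- symmetric expression
  have hsym : ∑ i : Fin k, ‖proj Eᗮ (g i)‖ ^ 2 = ∑ i : Fin k, ‖proj Gᗮ (η' i)‖ ^ 2 := by
    have h1 : ∀ i : Fin k, ‖proj Eᗮ (g i)‖ ^ 2 = 1 - ∑ j : Fin k, ⟪η' j, g i⟫ ^ 2 := by
      intro i
      rw [hEdef, norm_proj_orth_sq honη, hnormg i, one_pow]
    have h2 : ∀ i : Fin k, ‖proj Gᗮ (η' i)‖ ^ 2 = 1 - ∑ j : Fin k, ⟪g j, η' i⟫ ^ 2 := by
      intro i
      rw [hGdef, norm_proj_orth_sq hong, hnormη i, one_pow]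
    simp only [h1, h2]
    rw [Finset.sum_sub_distrib, Finset.sum_sub_distrib]
    congr 1
    rw [Finset.sum_comm]
    exact Finset.sum_congr rfl fun i _ => Finset.sum_congr rfl fun j _ => by
      rw [real_inner_comm]
  -- tail sums
  set tail : Fin k → ℝ := fun i => ∑ m ∈ Finset.Ico k n, ⟪γ (m + 1), η' i⟫ ^ 2 with htaildef
  have htail_nonneg : ∀ i : Fin k, 0 ≤ tail i := fun i =>
    Finset.sum_nonneg fun m _ => sq_nonneg _
  have hGperp : ∀ i : Fin k, ‖proj Gᗮ (η' i)‖ ^ 2 = a i + tail i := by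
    intro i
    rw [hGdef, norm_proj_orth_sq hong, hnormη i, one_pow, haPerp i, hrange (η' i)]
    simp only [htaildef]
    ring
  -- key identity and bound for the tail
  set y : Fin k → H := fun i => proj Φᗮ (η' i) with hydef
  set z : Fin k → H := fun i => ContinuousLinearMap.adjoint R (y i) with hzdef
  have hkey : ∀ i : Fin k, ∀ m ∈ Finset.Ico k n,
      (μ ((i : ℕ) + 1) - lam (m + 1)) * ⟪γ (m + 1), η' i⟫ = ⟪γ (m + 1), z i⟫ := by
    intro i m hm
    rw [Finset.mem_Ico] at hm
    have hik := i.isLt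
    have hγjΦ : γ (m + 1) ∈ Φ := by
      rw [← hγspan]
      exact subset_span ⟨m + 1, Set.mem_Icc.2 ⟨by omega, by omega⟩, rfl⟩
    have hηmem : (i : ℕ) + 1 ∈ Set.Icc 1 r := Set.mem_Icc.2 ⟨by omega, by omega⟩
    have e1 : ⟪T (γ (m + 1)), η' i⟫ = μ ((i : ℕ) + 1) * ⟪γ (m + 1), η' i⟫ := by
      rw [hTsa]
      show ⟪γ (m + 1), T (η ((i : ℕ) + 1))⟫ = _
      rw [hTeig _ hηmem, real_inner_smul_right]
    have hRγ : proj Φᗮ (T (γ (m + 1))) = R (γ (m + 1)) := by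
      rw [hRdef]
      show _ = proj Φᗮ (T (proj Φ (γ (m + 1))))
      rw [proj_of_mem hγjΦ]
    have e3 : ⟪proj Φᗮ (T (γ (m + 1))), η' i⟫ = ⟪γ (m + 1), z i⟫ := by
      have lhs : ⟪proj Φᗮ (T (γ (m + 1))), η' i⟫ = ⟪T (γ (m + 1)), proj Φᗮ (η' i)⟫ :=
        proj_inner_left Φᗮ _ _
      have rhs : ⟪γ (m + 1), z i⟫ = ⟪R (γ (m + 1)), y i⟫ := by
        rw [hzdef]
        exact ContinuousLinearMap.adjoint_inner_right R _ _
      rw [lhs, rhs, ← hRγ, hydef]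
      show ⟪T (γ (m + 1)), proj Φᗮ (η' i)⟫ = ⟪proj Φᗮ (T (γ (m + 1))), proj Φᗮ (η' i)⟫
      rw [proj_inner_left Φᗮ (T (γ (m + 1))) (proj Φᗮ (η' i)),
        proj_of_mem (proj_mem Φᗮ (η' i))]
    have e2 : ⟪T (γ (m + 1)), η' i⟫
        = lam (m + 1) * ⟪γ (m + 1), η' i⟫ + ⟪γ (m + 1), z i⟫ := by
      conv_lhs => rw [← proj_add_proj_orthogonal Φ (T (γ (m + 1)))]
      rw [inner_add_left, hγeig _ (Set.mem_Icc.2 ⟨by omega, by omega⟩),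
        real_inner_smul_left, e3]
    rw [sub_mul, ← e1, e2]
    ring
  have hδj : ∀ i : Fin k, ∀ m ∈ Finset.Ico k n, δ ≤ μ ((i : ℕ) + 1) - lam (m + 1) := by
    intro i m hm
    rw [Finset.mem_Ico] at hm
    have hik := i.isLt
    have hm1 : (i : ℕ) + 1 ∈ Set.Icc 1 (r + 1) := by rw [Set.mem_Icc]; omega
    have hm2 : k ∈ Set.Icc 1 (r + 1) := by rw [Set.mem_Icc]; omega
    have hm3 : k + 1 ∈ Set.Icc 1 n := by rw [Set.mem_Icc]; omega
    have hm4 : m + 1 ∈ Set.Icc 1 n := by rw [Set.mem_Icc]; omega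
    have hmu : μ k ≤ μ ((i : ℕ) + 1) := hμmono _ hm1 _ hm2 (by omega)
    have hlm : lam (m + 1) ≤ lam (k + 1) := hlam _ hm3 _ hm4 (by omega)
    rw [hδdef]
    linarith
  have htail_bound : ∀ i : Fin k, δ ^ 2 * tail i ≤ C ^ 2 * a i := by
    intro i
    have hstep : δ ^ 2 * tail i ≤ ∑ m ∈ Finset.Ico k n, ⟪γ (m + 1), z i⟫ ^ 2 := by
      rw [htaildef]
      simp only []
      rw [Finset.mul_sum]
      refine Finset.sum_le_sum fun m hm => ?_
      have hk' := hkey i m hm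
      have hd' := hδj i m hm
      have hsq : ⟪γ (m + 1), z i⟫ ^ 2
          = (μ ((i : ℕ) + 1) - lam (m + 1)) ^ 2 * ⟪γ (m + 1), η' i⟫ ^ 2 := by
        rw [← hk']; ring
      have hdd : δ ^ 2 ≤ (μ ((i : ℕ) + 1) - lam (m + 1)) ^ 2 :=
        pow_le_pow_left₀ hδpos.le hd' 2
      rw [hsq]
      exact mul_le_mul_of_nonneg_right hdd (sq_nonneg _)
    have hbes : ∑ m ∈ Finset.Ico k n, ⟪γ (m + 1), z i⟫ ^ 2 ≤ ‖z i‖ ^ 2 := by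
      refine bessel_finset (Finset.Ico k n) ?_ (z i)
      intro p hp q hq
      rw [Finset.mem_Ico] at hp hq
      rw [hγ _ (Set.mem_Icc.2 ⟨by omega, by omega⟩) _ (Set.mem_Icc.2 ⟨by omega, by omega⟩)]
      by_cases h : p = q
      · subst h; simp
      · rw [if_neg (by omega), if_neg h]
    have hz : ‖z i‖ ≤ C * ‖y i‖ := by
      rw [hzdef, hCdef]
      calc ‖ContinuousLinearMap.adjoint R (y i)‖ ≤ ‖ContinuousLinearMap.adjoint R‖ * ‖y i‖ :=
            ContinuousLinearMap.le_opNorm _ _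
        _ = ‖R‖ * ‖y i‖ := by rw [ContinuousLinearMap.adjoint.norm_map]
    have hz2 : ‖z i‖ ^ 2 ≤ C ^ 2 * a i := by
      have h1 : ‖z i‖ ^ 2 ≤ (C * ‖y i‖) ^ 2 := by
        have := norm_nonneg (z i)
        nlinarith [norm_nonneg (z i), norm_nonneg (y i), hz]
      have h2 : (C * ‖y i‖) ^ 2 = C ^ 2 * a i := by
        show (C * ‖y i‖) ^ 2 = C ^ 2 * ‖y i‖ ^ 2
        ring
      linarith
    linarith
  -- assembling
  have hBsym : dF G E ^ 2 = ∑ i : Fin k, (a i + tail i) := by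
    rw [hB, hsym]
    exact Finset.sum_congr rfl fun i _ => hGperp i
  constructor
  · rw [hA, hBsym]
    refine Finset.sum_le_sum fun i _ => ?_
    have := htail_nonneg i
    show a i ≤ a i + tail i
    linarith
  · rw [hA, hBsym]
    have hstep : ∀ i : Fin k, a i + tail i ≤ (1 + C ^ 2 / δ ^ 2) * a i := by
      intro i
      have h1 : tail i ≤ C ^ 2 / δ ^ 2 * a i := by
        rw [div_mul_eq_mul_div, le_div_iff₀ hδ2]
        calc tail i * δ ^ 2 = δ ^ 2 * tail i := by ring
          _ ≤ C ^ 2 * a i := htail_bound i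
      linarith [h1]
    calc ∑ i : Fin k, (a i + tail i) ≤ ∑ i : Fin k, (1 + C ^ 2 / δ ^ 2) * a i :=
          Finset.sum_le_sum fun i _ => hstep i
      _ = (1 + C ^ 2 / δ ^ 2) * ∑ i : Fin k, a i := by rw [Finset.mul_sum]


end
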